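/- Suppose γ > 1. Then, as z → 0 from the left, (−z)·m(z) → (γ − 1)/γ, z²·m'(z) → (γ − 1)/γ, and m(z) + z·m'(z) → 1/((γ − 1)γ). -/

import Mathlib

open Filter Topology

/-- The Stieltjes transform of the Marchenko–Pastur law with ratio `γ`,
defined for `z < 0` by `m(z) = (1 − γ − z − √((1 − γ − z)² − 4γz)) / (2γz)`. -/
noncomputable def mMP (γ z : ℝ) : ℝ :=
  (1 - γ - z - Real.sqrt ((1 - γ - z) ^ 2 - 4 * γ * z)) / (2 * γ * z)

lemma D_pos (γ z : ℝ) (hγ : 0 < γ) (hz : z < 0) :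
    0 < (1 - γ - z) ^ 2 - 4 * γ * z := by nlinarith [sq_nonneg (1 - γ - z)]

lemma hasDerivAt_mMP (γ z : ℝ) (hγ : 1 < γ) (hz : z < 0) :
    HasDerivAt (mMP γ)
      ((((-1) - (-2 * (1 - γ - z) - 4 * γ) / (2 * Real.sqrt ((1 - γ - z) ^ 2 - 4 * γ * z)))
            * (2 * γ * z)
          - (1 - γ - z - Real.sqrt ((1 - γ - z) ^ 2 - 4 * γ * z)) * (2 * γ))
        / (2 * γ * z) ^ 2) z := by
  have hγ0 : (0:ℝ) < γ := lt_trans one_pos hγ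
  have hD : 0 < (1 - γ - z) ^ 2 - 4 * γ * z := D_pos γ z hγ0 hz
  have h1 : HasDerivAt (fun z : ℝ => 1 - γ - z) (-1) z := by
    simpa using (hasDerivAt_id z).const_sub (1 - γ)
  have h2 : HasDerivAt (fun z : ℝ => (1 - γ - z) ^ 2 - 4 * γ * z)
      ((2:ℝ) * (1 - γ - z) ^ 1 * (-1) - 4 * γ * 1) z :=
    (h1.pow 2).sub ((hasDerivAt_id z).const_mul (4 * γ))
  have hsqrt : HasDerivAt (fun z : ℝ => Real.sqrt ((1 - γ - z) ^ 2 - 4 * γ * z))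
      (1 / (2 * Real.sqrt ((1 - γ - z) ^ 2 - 4 * γ * z)) * ((2:ℝ) * (1 - γ - z) ^ 1 * (-1) - 4 * γ * 1)) z := by
    simpa [Function.comp_def] using (Real.hasDerivAt_sqrt hD.ne').comp z h2
  have hN : HasDerivAt (fun z : ℝ => 1 - γ - z - Real.sqrt ((1 - γ - z) ^ 2 - 4 * γ * z))
      ((-1) - 1 / (2 * Real.sqrt ((1 - γ - z) ^ 2 - 4 * γ * z)) * ((2:ℝ) * (1 - γ - z) ^ 1 * (-1) - 4 * γ * 1)) z :=
    h1.sub hsqrt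
  have hden : HasDerivAt (fun z : ℝ => 2 * γ * z) (2 * γ * 1) z :=
    (hasDerivAt_id z).const_mul (2 * γ)
  have hne : 2 * γ * z ≠ 0 := by
    have : 2 * γ * z < 0 := mul_neg_of_pos_of_neg (by positivity) hz
    exact this.ne
  have hm := hN.div hden hne
  have hsne : Real.sqrt ((1 - γ - z) ^ 2 - 4 * γ * z) ≠ 0 :=
    (Real.sqrt_pos.mpr hD).ne'
  convert hm using 1
  · rfl
  · rfl
  · rfl
  · ring

lemma sqrt_cont (γ : ℝ) :
    ContinuousAt (fun z : ℝ => Real.sqrt ((1 - γ - z) ^ 2 - 4 * γ * z)) 0 := by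
  fun_prop

lemma sqrt_at_zero (γ : ℝ) (hγ : 1 < γ) :
    Real.sqrt ((1 - γ - 0) ^ 2 - 4 * γ * 0) = γ - 1 := by
  rw [show (1 - γ - 0) ^ 2 - 4 * γ * 0 = (1 - γ) ^ 2 by ring, Real.sqrt_sq_eq_abs,
    abs_of_neg (by linarith : (1:ℝ) - γ < 0)]
  ring

theorem mMP_limits_at_zero_of_gamma_gt_one (γ : ℝ) (hγ : 1 < γ) :
    Tendsto (fun z => (-z) * mMP γ z) (𝓝[<] 0) (𝓝 ((γ - 1) / γ)) ∧
    Tendsto (fun z => z ^ 2 * deriv (mMP γ) z) (𝓝[<] 0) (𝓝 ((γ - 1) / γ)) ∧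
    Tendsto (fun z => mMP γ z + z * deriv (mMP γ) z) (𝓝[<] 0) (𝓝 (1 / ((γ - 1) * γ))) := by
  have hγ0 : (0:ℝ) < γ := lt_trans one_pos hγ
  have hγ1 : γ - 1 ≠ 0 := by linarith
  have hγne : γ ≠ 0 := hγ0.ne'
  set S : ℝ → ℝ := fun z => Real.sqrt ((1 - γ - z) ^ 2 - 4 * γ * z) with hS
  have hS0 : S 0 = γ - 1 := sqrt_at_zero γ hγ
  have hScont : ContinuousAt S 0 := sqrt_cont γ
  have hSne : ∀ z : ℝ, z < 0 → S z ≠ 0 := fun z hz =>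
    (Real.sqrt_pos.mpr (D_pos γ z hγ0 hz)).ne'
  have hderiv : ∀ z : ℝ, z < 0 → deriv (mMP γ) z =
      ((((-1) - (-2 * (1 - γ - z) - 4 * γ) / (2 * S z)) * (2 * γ * z)
          - (1 - γ - z - S z) * (2 * γ)) / (2 * γ * z) ^ 2) := fun z hz =>
    (hasDerivAt_mMP γ z hγ hz).deriv
  -- continuous "model" functions
  have hScont' : ContinuousAt (fun z => 2 * S z) 0 := hScont.const_mul 2
  have h2Sne : (2 : ℝ) * S 0 ≠ 0 := by rw [hS0]; positivity
  have hNp : ContinuousAt (fun z : ℝ => (-1 : ℝ) - (-2 * (1 - γ - z) - 4 * γ) / (2 * S z)) 0 := by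
    apply ContinuousAt.sub continuousAt_const
    exact ContinuousAt.div (by fun_prop) hScont' h2Sne
  -- limit 1
  have lim1 : Tendsto (fun z => (-z) * mMP γ z) (𝓝[<] 0) (𝓝 ((γ - 1) / γ)) := by
    have hg : ContinuousAt (fun z : ℝ => -(1 - γ - z - S z) / (2 * γ)) 0 := by
      apply ContinuousAt.div _ continuousAt_const (by positivity)
      fun_prop
    have := (hg.tendsto).mono_left (nhdsWithin_le_nhds (s := Set.Iio (0:ℝ)))
    refine Tendsto.congr' (f₁ := fun z : ℝ => -(1 - γ - z - S z) / (2 * γ)) ?_ ?_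
    swap
    · convert this using 2
      simp only [hS0]; field_simp; ring
    filter_upwards [self_mem_nhdsWithin] with z hz
    have hzne : z ≠ 0 := ne_of_lt hz
    simp only [mMP, hS]
    field_simp
  -- limit 2
  have lim2 : Tendsto (fun z => z ^ 2 * deriv (mMP γ) z) (𝓝[<] 0) (𝓝 ((γ - 1) / γ)) := by
    have hg : ContinuousAt (fun z : ℝ =>
        (((-1 : ℝ) - (-2 * (1 - γ - z) - 4 * γ) / (2 * S z)) * z - (1 - γ - z - S z)) / (2 * γ)) 0 := by
      apply ContinuousAt.div _ continuousAt_const (by positivity)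
      exact ((hNp.mul continuousAt_id).sub (by fun_prop))
    have := (hg.tendsto).mono_left (nhdsWithin_le_nhds (s := Set.Iio (0:ℝ)))
    refine Tendsto.congr' (f₁ := fun z : ℝ =>
        (((-1 : ℝ) - (-2 * (1 - γ - z) - 4 * γ) / (2 * S z)) * z - (1 - γ - z - S z)) / (2 * γ)) ?_ ?_
    swap
    · convert this using 2
      simp only [hS0]; field_simp; ring
    · filter_upwards [self_mem_nhdsWithin] with z hz
      have hzne : z ≠ 0 := ne_of_lt hz
      rw [hderiv z hz]
      have := hSne z hz
      field_simp
  -- limit 3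
  have lim3 : Tendsto (fun z => mMP γ z + z * deriv (mMP γ) z) (𝓝[<] 0) (𝓝 (1 / ((γ - 1) * γ))) := by
    have hg : ContinuousAt (fun z : ℝ =>
        ((-1 : ℝ) - (-2 * (1 - γ - z) - 4 * γ) / (2 * S z)) / (2 * γ)) 0 := by
      exact ContinuousAt.div hNp continuousAt_const (by positivity)
    have := (hg.tendsto).mono_left (nhdsWithin_le_nhds (s := Set.Iio (0:ℝ)))
    refine Tendsto.congr' (f₁ := fun z : ℝ =>
        ((-1 : ℝ) - (-2 * (1 - γ - z) - 4 * γ) / (2 * S z)) / (2 * γ)) ?_ ?_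
    swap
    · convert this using 2
      simp only [hS0]; field_simp; ring
    · filter_upwards [self_mem_nhdsWithin] with z hz
      have hzne : z ≠ 0 := ne_of_lt hz
      rw [hderiv z hz]
      have := hSne z hz
      simp only [mMP, hS]
      field_simp
      ring
  exact ⟨lim1, lim2, lim3⟩
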